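/- For every permutation τ ∈ S_n and every 0 ≤ k ≤ n, inv(τ) ≤ C(n−k, 2) − k + Σ_{i=1}^k τ(i). -/

import Mathlib

open Finset

def inversions {n : ℕ} (π : Equiv.Perm (Fin n)) : ℕ :=
  (Finset.univ.filter (fun p : Fin n × Fin n => p.1 < p.2 ∧ π p.2 < π p.1)).card

def winv {n : ℕ} (π : Equiv.Perm (Fin n)) : ℤ :=
  ∑ p ∈ Finset.univ.filter (fun p : Fin n × Fin n => p.1 < p.2 ∧ π p.2 < π p.1),
    ((π p.1 : ℤ) - (π p.2 : ℤ))

def cwinv {n : ℕ} (π : Equiv.Perm (Fin n)) : ℤ :=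
  n * inversions π - 2 * winv π
lemma card_filter_val_lt {n k : ℕ} (hk : k ≤ n) :
    ((univ : Finset (Fin n)).filter fun i : Fin n => (i : ℕ) < k).card = k := by
  rw [Finset.card_filter, Fin.sum_univ_eq_sum_range (fun i => if i < k then 1 else 0) n, ← Finset.card_filter]
  have : (Finset.range n).filter (fun i => i < k) = Finset.range k := by
    ext x; simp; omega
  rw [this, Finset.card_range]

lemma sum_aux {n k : ℕ} (hk : k ≤ n) :
    ∑ i ∈ (univ : Finset (Fin n)).filter (fun i : Fin n => k ≤ (i : ℕ)), (n - 1 - (i : ℕ))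
      = (n - k).choose 2 := by
  rw [Finset.sum_filter, Fin.sum_univ_eq_sum_range (fun i => if k ≤ i then n - 1 - i else 0) n, ← Finset.sum_filter]
  have h1 : (Finset.range n).filter (fun i => k ≤ i) = Finset.Ico k n := by
    ext x; simp; omega
  rw [h1, Finset.sum_Ico_eq_sum_range]
  have h2 : ∀ j ∈ Finset.range (n - k), n - 1 - (k + j) = (n - k) - 1 - j := by
    intro j hj; omega
  rw [Finset.sum_congr rfl h2, Finset.sum_range_reflect (fun j => j)]
  have := Finset.sum_range_id_mul_two (n - k)
  have h3 := Nat.choose_two_right (n - k)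
  omega

theorem inv_le_prefix_sum {n : ℕ} (τ : Equiv.Perm (Fin n)) (k : ℕ) (hk : k ≤ n) :
    (inversions τ : ℤ)
      ≤ ((n - k).choose 2 : ℤ) - k
        + ∑ i ∈ Finset.univ.filter (fun i : Fin n => (i : ℕ) < k), ((τ i : ℤ) + 1) := by
  unfold inversions
  set S := Finset.univ.filter (fun p : Fin n × Fin n => p.1 < p.2 ∧ τ p.2 < τ p.1) with hS
  -- split
  have hsplit : S.card = (S.filter fun p => (p.1 : ℕ) < k).card
      + (S.filter fun p => ¬ (p.1 : ℕ) < k).card :=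
    (Finset.card_filter_add_card_filter_not _).symm
  -- Claim A
  set T : Finset (Fin n × Fin n) :=
    Finset.univ.filter (fun p => (p.1 : ℕ) < k ∧ p.2 < τ p.1) with hT
  have hA : (S.filter fun p => (p.1 : ℕ) < k).card ≤ T.card := by
    apply Finset.card_le_card_of_injOn (fun p => (p.1, τ p.2))
    · intro p hp
      simp only [hS, Finset.mem_coe, Finset.mem_filter, Finset.mem_univ, true_and] at hp
      simp only [hT, Finset.mem_coe, Finset.mem_filter, Finset.mem_univ, true_and]
      exact ⟨hp.2, hp.1.2⟩
    · intro p _ q _ h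
      simp only [Prod.mk.injEq] at h
      exact Prod.ext h.1 (τ.injective h.2)
  have hTcard : T.card = ∑ i ∈ Finset.univ.filter (fun i : Fin n => (i : ℕ) < k), ((τ i : ℕ)) := by
    rw [Finset.card_eq_sum_card_fiberwise
      (f := Prod.fst) (t := Finset.univ.filter (fun i : Fin n => (i : ℕ) < k))
      (fun p hp => by
        simp only [hT, Finset.mem_coe, Finset.mem_filter, Finset.mem_univ, true_and] at hp ⊢
        exact hp.1)]
    refine Finset.sum_congr rfl fun i hi => ?_
    simp only [Finset.mem_filter, Finset.mem_univ, true_and] at hi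
    have : T.filter (fun p => p.1 = i) = {i} ×ˢ Finset.Iio (τ i) := by
      ext p
      simp only [hT, Finset.mem_filter, Finset.mem_univ, true_and, Finset.mem_product,
        Finset.mem_singleton, Finset.mem_Iio]
      constructor
      · rintro ⟨⟨_, h2⟩, h3⟩; exact ⟨h3, h3 ▸ h2⟩
      · rintro ⟨h1, h2⟩; exact ⟨⟨h1 ▸ hi, h1 ▸ h2⟩, h1⟩
    rw [this, Finset.card_product, Finset.card_singleton, Fin.card_Iio, one_mul]
  -- Claim B
  set U : Finset (Fin n × Fin n) :=
    Finset.univ.filter (fun p => k ≤ (p.1 : ℕ) ∧ p.1 < p.2) with hU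
  have hB : (S.filter fun p => ¬ (p.1 : ℕ) < k).card ≤ U.card := by
    apply Finset.card_le_card
    intro p hp
    simp only [hS, Finset.mem_filter, Finset.mem_univ, true_and, not_lt] at hp
    simp only [hU, Finset.mem_filter, Finset.mem_univ, true_and]
    exact ⟨hp.2, hp.1.1⟩
  have hUcard : U.card = (n - k).choose 2 := by
    rw [Finset.card_eq_sum_card_fiberwise
      (f := Prod.fst) (t := Finset.univ.filter (fun i : Fin n => k ≤ (i : ℕ)))
      (fun p hp => by
        simp only [hU, Finset.mem_coe, Finset.mem_filter, Finset.mem_univ, true_and] at hp ⊢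
        exact hp.1)]
    rw [← sum_aux (n := n) hk]
    refine Finset.sum_congr rfl fun i hi => ?_
    simp only [Finset.mem_filter, Finset.mem_univ, true_and] at hi
    have : U.filter (fun p => p.1 = i) = {i} ×ˢ Finset.Ioi i := by
      ext p
      simp only [hU, Finset.mem_filter, Finset.mem_univ, true_and, Finset.mem_product,
        Finset.mem_singleton, Finset.mem_Ioi]
      constructor
      · rintro ⟨⟨_, h2⟩, h3⟩; exact ⟨h3, h3 ▸ h2⟩
      · rintro ⟨h1, h2⟩; exact ⟨⟨h1 ▸ hi, h1 ▸ h2⟩, h1⟩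
    rw [this, Finset.card_product, Finset.card_singleton, Fin.card_Ioi, one_mul]
  have key : S.card ≤ (n - k).choose 2
      + ∑ i ∈ Finset.univ.filter (fun i : Fin n => (i : ℕ) < k), ((τ i : ℕ)) := by
    omega
  have hcard := card_filter_val_lt (n := n) hk
  have hrhs : ∑ i ∈ Finset.univ.filter (fun i : Fin n => (i : ℕ) < k), ((τ i : ℤ) + 1)
      = (∑ i ∈ Finset.univ.filter (fun i : Fin n => (i : ℕ) < k), ((τ i : ℕ)) : ℕ) + k := by
    rw [Finset.sum_add_distrib, Finset.sum_const, hcard]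
    push_cast
    ring
  rw [hrhs]
  have keyZ : (S.card : ℤ) ≤ ((n - k).choose 2 : ℤ)
      + ((∑ i ∈ Finset.univ.filter (fun i : Fin n => (i : ℕ) < k), ((τ i : ℕ)) : ℕ) : ℤ) := by
    exact_mod_cast key
  linarith
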